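/- SGD threshold ordering for corrected cross-entropy loss (expected step): with learning rate 0 ≤ α ≤ 4 and current thresholds satisfying b_i ≥ b_{i+1}, the expected updated gap satisfies E_ỹ[b_i^{new} − b_{i+1}^{new}] = (b_i − b_{i+1}) − α(σ(g+b_i) − σ(g+b_{i+1})) + α P(y = i+1) ≥ 0, where the expectation is over the noisy label ỹ whose marginal is q = N^T p. -/

import Mathlib

open Matrix Finset

noncomputable def sigmoid (a : ℝ) : ℝ := 1 / (1 + Real.exp (-a))

lemma sigmoid_hasDerivAt (x : ℝ) :
    HasDerivAt sigmoid (Real.exp (-x) / (1 + Real.exp (-x)) ^ 2) x := by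
  have hne : (1 + Real.exp (-x)) ≠ 0 := by positivity
  have h1 : HasDerivAt (fun y : ℝ => 1 + Real.exp (-y)) (-Real.exp (-x)) x := by
    have := ((hasDerivAt_neg x).exp).const_add 1
    simpa using this
  have h2 := h1.inv hne
  have : HasDerivAt (fun y : ℝ => (1 + Real.exp (-y))⁻¹)
      (Real.exp (-x) / (1 + Real.exp (-x)) ^ 2) x := by
    rw [neg_neg] at h2; exact h2
  unfold sigmoid
  simp only [one_div]
  exact this

lemma sigmoid_mono {a b : ℝ} (h : b ≤ a) : sigmoid b ≤ sigmoid a := by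
  unfold sigmoid
  have hb : (0:ℝ) < 1 + Real.exp (-b) := by positivity
  apply div_le_div_of_nonneg_left zero_le_one (by positivity)
  have := Real.exp_le_exp.mpr (neg_le_neg h)
  linarith

lemma sigmoid_lip {a b : ℝ} (h : b ≤ a) : sigmoid a - sigmoid b ≤ (a - b) / 4 := by
  rcases eq_or_lt_of_le h with rfl | hlt
  · simp
  · obtain ⟨c, _, hc⟩ := exists_hasDerivAt_eq_slope sigmoid
      (fun x => Real.exp (-x) / (1 + Real.exp (-x)) ^ 2) hlt
      (fun x _ => (sigmoid_hasDerivAt x).continuousAt.continuousWithinAt)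
      (fun x _ => sigmoid_hasDerivAt x)
    have hd : Real.exp (-c) / (1 + Real.exp (-c)) ^ 2 ≤ 1 / 4 := by
      have he : 0 < Real.exp (-c) := Real.exp_pos _
      rw [div_le_div_iff₀ (by positivity) (by norm_num)]
      nlinarith [sq_nonneg (1 - Real.exp (-c))]
    rw [hc] at hd
    rw [div_le_div_iff₀ (by linarith) (by norm_num)] at hd
    linarith

theorem sgd_ce_expected_gap_nonneg
    (K : ℕ) (N : Matrix (Fin K) (Fin K) ℝ)
    (hinv : IsUnit N.det)
    (hnn : ∀ y j, 0 ≤ N y j)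
    (hrow : ∀ y, ∑ j, N y j = 1)
    (p : Fin K → ℝ) (hp_nn : ∀ j, 0 ≤ p j) (hp_sum : ∑ j, p j = 1)
    (q : Fin K → ℝ) (hq : ∀ m, q m = ∑ j, p j * N j m)
    (g bi bi1 α : ℝ) (hb : bi1 ≤ bi) (hα0 : 0 ≤ α) (hα4 : α ≤ 4)
    (k : Fin K) :
    (∑ m, q m * ((bi - bi1) - α * (sigmoid (g + bi) - sigmoid (g + bi1))
        + α * N⁻¹ m k)
      = (bi - bi1) - α * (sigmoid (g + bi) - sigmoid (g + bi1)) + α * p k) ∧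
    0 ≤ (bi - bi1) - α * (sigmoid (g + bi) - sigmoid (g + bi1)) + α * p k := by
  have hqsum : ∑ m, q m = 1 := by
    simp only [hq]
    rw [Finset.sum_comm]
    simp_rw [← Finset.mul_sum, hrow]
    simpa using hp_sum
  have hNN : N * N⁻¹ = 1 := Matrix.mul_nonsing_inv N hinv
  have hqinv : ∑ m, q m * N⁻¹ m k = p k := by
    simp only [hq, Finset.sum_mul]
    rw [Finset.sum_comm]
    have : ∀ j, ∑ m, p j * N j m * N⁻¹ m k = p j * (N * N⁻¹) j k := by
      intro j
      rw [Matrix.mul_apply, Finset.mul_sum]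
      apply Finset.sum_congr rfl
      intro m _
      ring
    simp_rw [this, hNN, Matrix.one_apply]
    simp
  constructor
  · set C := (bi - bi1) - α * (sigmoid (g + bi) - sigmoid (g + bi1)) with hC
    have : ∑ m, q m * (C + α * N⁻¹ m k)
        = (∑ m, q m) * C + α * ∑ m, q m * N⁻¹ m k := by
      simp_rw [mul_add, Finset.sum_add_distrib, Finset.sum_mul, mul_comm (α : ℝ), ← Finset.sum_mul]
      ring_nf
      rw [Finset.mul_sum]
      congr 1
      apply Finset.sum_congr rfl
      intro m _; ring
    rw [this, hqsum, hqinv]; ring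
  · have h1 : sigmoid (g + bi1) ≤ sigmoid (g + bi) := sigmoid_mono (by linarith)
    have h2 : sigmoid (g + bi) - sigmoid (g + bi1) ≤ ((g + bi) - (g + bi1)) / 4 :=
      sigmoid_lip (by linarith)
    have h3 : α * (sigmoid (g + bi) - sigmoid (g + bi1)) ≤ bi - bi1 := by
      nlinarith
    have := hp_nn k
    nlinarith
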